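/- Let D be a maximal pointed convex cone in a finite-dimensional Euclidean space V (i.e., D is a convex cone with D ∩ (-D) = {0} and D ∪ (-D) = V), with V of dimension ≥ 1. Then there exists a nonzero v ∈ V such that D ⊆ H_v, and for any such v, the open half-space {x : ⟨x,v⟩ < 0} is contained in D and the closure of D equals H_v. -/

import Mathlib

open Set

noncomputable section

def IsCone {V : Type*} [AddCommGroup V] [Module ℝ V] (C : Set V) : Prop :=
  (0 : V) ∈ C ∧ ∀ r : ℝ, 0 ≤ r → ∀ v ∈ C, r • v ∈ C

def IsConvexCone {V : Type*} [AddCommGroup V] [Module ℝ V] (C : Set V) : Prop :=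
  IsCone C ∧ ∀ u ∈ C, ∀ v ∈ C, u + v ∈ C

def IsMaxPointedCone {V : Type*} [AddCommGroup V] [Module ℝ V] (D : Set V) : Prop :=
  IsConvexCone D ∧ D ∩ (-D) = {0} ∧ D ∪ (-D) = Set.univ

def hatCone {V : Type*} [AddCommGroup V] [Module ℝ V] (X : Set V) : Set V :=
  {0} ∪ {v | ∃ r : ℝ, 0 ≤ r ∧ ∃ x ∈ X, v = r • x}

def sphereN (n : ℕ) : Set (EuclideanSpace ℝ (Fin (n + 1))) := Metric.sphere 0 1

def PhiPlus (n : ℕ) : Set (EuclideanSpace ℝ (Fin (n + 1))) :=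
  {x | x ∈ sphereN n ∧ ∃ m : Fin (n + 1), 0 < x m ∧ ∀ i, m < i → x i = 0}

def PhiMinus (n : ℕ) : Set (EuclideanSpace ℝ (Fin (n + 1))) := {x | -x ∈ PhiPlus n}

def Ln (n : ℕ) : Set (Set (EuclideanSpace ℝ (Fin (n + 1)))) :=
  {X | ∃ D, IsMaxPointedCone D ∧ X = D ∩ PhiPlus n}

theorem stmt7 {V : Type*} [NormedAddCommGroup V] [InnerProductSpace ℝ V]
    [FiniteDimensional ℝ V] (hdim : 1 ≤ Module.finrank ℝ V)
    (D : Set V) (hD : IsMaxPointedCone D) :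
    (∃ v : V, v ≠ 0 ∧ D ⊆ {x : V | (inner ℝ x v : ℝ) ≤ 0}) ∧
      ∀ v : V, v ≠ 0 → D ⊆ {x : V | (inner ℝ x v : ℝ) ≤ 0} →
        {x : V | (inner ℝ x v : ℝ) < 0} ⊆ D ∧
          closure D = {x : V | (inner ℝ x v : ℝ) ≤ 0} := by
  obtain ⟨⟨⟨h0, hsmul⟩, hadd⟩, hpt, hmax⟩ := hD
  have hconv : Convex ℝ D := fun x hx y hy a b ha hb _ =>
    hadd _ (hsmul a ha x hx) _ (hsmul b hb y hy)
  have hmemD : ∀ x : V, x ∈ D ∨ -x ∈ D := by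
    intro x
    have : x ∈ D ∪ (-D) := by rw [hmax]; trivial
    rcases this with h | h
    · exact Or.inl h
    · exact Or.inr h
  -- second part first, as a general fact
  have part2 : ∀ v : V, v ≠ 0 → D ⊆ {x : V | (inner ℝ x v : ℝ) ≤ 0} →
      {x : V | (inner ℝ x v : ℝ) < 0} ⊆ D ∧
        closure D = {x : V | (inner ℝ x v : ℝ) ≤ 0} := by
    intro v hv hsub
    have hopen : {x : V | (inner ℝ x v : ℝ) < 0} ⊆ D := by
      intro x hx
      rcases hmemD x with h | h
      · exact h
      · exfalso
        have h1 : (inner ℝ (-x) v : ℝ) ≤ 0 := hsub h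
        rw [inner_neg_left] at h1
        have hx' : (inner ℝ x v : ℝ) < 0 := hx
        linarith
    refine ⟨hopen, ?_⟩
    apply Set.Subset.antisymm
    · exact closure_minimal hsub (isClosed_le (continuous_id.inner continuous_const)
        continuous_const)
    · intro x hx
      have hxv : (inner ℝ x v : ℝ) ≤ 0 := hx
      have htend : Filter.Tendsto (fun t : ℝ => x - t • v) (nhdsWithin 0 (Set.Ioi 0))
          (nhds x) := by
        have hc : Continuous fun t : ℝ => x - t • v := by continuity
        have := hc.tendsto 0
        simpa using this.mono_left nhdsWithin_le_nhds
      refine mem_closure_of_tendsto htend ?_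
      filter_upwards [self_mem_nhdsWithin] with t ht
      apply hopen
      show (inner ℝ (x - t • v) v : ℝ) < 0
      rw [inner_sub_left, real_inner_smul_left]
      have hvv : (0:ℝ) < inner ℝ v v := lt_of_le_of_ne real_inner_self_nonneg (Ne.symm (inner_self_ne_zero.2 hv))
      have : (0:ℝ) < t * inner ℝ v v := mul_pos ht hvv
      linarith
  refine ⟨?_, part2⟩
  -- existence of v
  have : Nontrivial V := Module.nontrivial_of_finrank_pos (R := ℝ) (by omega)
  obtain ⟨w, hw⟩ := exists_ne (0 : V)
  -- some nonzero point not in D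
  obtain ⟨p, hpD⟩ : ∃ p : V, p ∉ D := by
    by_contra h
    push_neg at h
    have hwin : w ∈ D ∩ (-D) := ⟨h w, by simpa using h (-w)⟩
    rw [hpt] at hwin
    exact hw hwin
  -- interior of D nonempty
  have hspan : affineSpan ℝ D = ⊤ := by
    rw [AffineSubspace.affineSpan_eq_top_iff_vectorSpan_eq_top_of_nonempty ℝ V V ⟨0, h0⟩]
    rw [eq_top_iff]
    intro x _
    have hmem : ∀ y ∈ D, y ∈ vectorSpan ℝ D := by
      intro y hy
      have := vsub_mem_vectorSpan ℝ hy h0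
      simpa using this
    rcases hmemD x with h | h
    · exact hmem x h
    · simpa using (vectorSpan ℝ D).neg_mem (hmem (-x) h)
  obtain ⟨x0, hx0⟩ : (interior D).Nonempty :=
    hconv.interior_nonempty_iff_affineSpan_eq_top.2 hspan
  -- Hahn-Banach separation of interior D from p
  obtain ⟨f, hf⟩ := geometric_hahn_banach_open_point hconv.interior isOpen_interior
    (fun h => hpD (interior_subset h))
  -- f ≤ f p on D
  have hle : ∀ x ∈ D, f x ≤ f p := by
    intro x hx
    have htend : Filter.Tendsto (fun t : ℝ => f (x + t • (x0 - x)))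
        (nhdsWithin 0 (Set.Ioi 0)) (nhds (f x)) := by
      have hc : Continuous fun t : ℝ => f (x + t • (x0 - x)) := by
        exact f.continuous.comp (by continuity)
      have := hc.tendsto 0
      simpa using this.mono_left nhdsWithin_le_nhds
    refine le_of_tendsto htend ?_
    filter_upwards [Ioo_mem_nhdsGT_of_mem (Set.left_mem_Ico.2 one_pos)] with t ht
    exact (hf _ (hconv.add_smul_sub_mem_interior hx hx0 ⟨ht.1, ht.2.le⟩)).le
  -- f ≤ 0 on D by scaling
  have hneg : ∀ x ∈ D, f x ≤ 0 := by
    intro x hx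
    by_contra h
    push_neg at h
    set r : ℝ := max 0 (f p / f x + 1) with hr
    have hr0 : 0 ≤ r := le_max_left _ _
    have hrD : r • x ∈ D := hsmul r hr0 x hx
    have h1 : f (r • x) ≤ f p := hle _ hrD
    rw [map_smul, smul_eq_mul] at h1
    have h2 : f p / f x + 1 ≤ r := le_max_right _ _
    have h3 : (f p / f x + 1) * f x ≤ r * f x := by
      apply mul_le_mul_of_nonneg_right h2 h.le
    rw [add_mul, div_mul_cancel₀ _ (ne_of_gt h), one_mul] at h3
    linarith
  -- convert f to inner product form
  set v : V := (InnerProductSpace.toDual ℝ V).symm f with hvdef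
  have hfv : ∀ x : V, f x = (inner ℝ x v : ℝ) := by
    intro x
    rw [real_inner_comm]
    exact (InnerProductSpace.toDual_symm_apply).symm
  have hvne : v ≠ 0 := by
    intro hv0
    have h1 : f x0 < f p := hf x0 hx0
    rw [hfv x0, hfv p, hv0, inner_zero_right, inner_zero_right] at h1
    exact lt_irrefl _ h1
  exact ⟨v, hvne, fun x hx => by rw [Set.mem_setOf_eq, ← hfv]; exact hneg x hx⟩
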